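/- arXiv:1304.3121 — 3 statements merged into one kernel-verified Lean document; each statement's English description precedes it below -/
import Mathlib

section
/- Lower bound on shared boundaries: suppose the net with boundaries N : k → l decomposes as N ≅ N₁ ; N₂ with N₁ : k → n and N₂ : n → l a pure composition, both with nonempty place sets, and let (P₁, P₂) be the induced oriented partition of the places of N. Then n ≥ dim(net(P₁ → P₂)) and n ≥ dim(net(P₂ → P₁)). -/
/-! Core definitions: nets with boundaries (Sobocinski et al.),
composition, tensor, isomorphism, step firing semantics, ports,
connections, networks, bases, wiring expressions and decompositions. -/

namespace NWB

/-- A net with boundaries `N : k → l` (without the contention axioms,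
which are packaged separately in `IsContention`). -/
structure NetB (k l : ℕ) : Type 1 where
  P : Type
  T : Type
  finP : Finite P
  finT : Finite T
  pre : T → Set P
  post : T → Set P
  src : T → Set (Fin k)
  tgt : T → Set (Fin l)
  con : T → T → Prop

/-- The contention relation axioms: reflexive, symmetric, and forced whenever
two transitions share a pre-place, post-place, or boundary port. -/
def IsContention {k l : ℕ} (N : NetB k l) : Prop :=
  (∀ t, N.con t t) ∧ (∀ t u, N.con t u → N.con u t) ∧
  (∀ t u,
    ((N.pre t ∩ N.pre u).Nonempty ∨ (N.post t ∩ N.post u).Nonempty ∨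
     (N.src t ∩ N.src u).Nonempty ∨ (N.tgt t ∩ N.tgt u).Nonempty) → N.con t u)

def setPre {k l : ℕ} (N : NetB k l) (U : Set N.T) : Set N.P := ⋃ u ∈ U, N.pre u
def setPost {k l : ℕ} (N : NetB k l) (U : Set N.T) : Set N.P := ⋃ u ∈ U, N.post u
def setSrc {k l : ℕ} (N : NetB k l) (U : Set N.T) : Set (Fin k) := ⋃ u ∈ U, N.src u
def setTgt {k l : ℕ} (N : NetB k l) (U : Set N.T) : Set (Fin l) := ⋃ u ∈ U, N.tgt u

/-- Mutually independent set of transitions: no two distinct members in contention. -/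
def MI {k l : ℕ} (N : NetB k l) (U : Set N.T) : Prop :=
  ∀ u ∈ U, ∀ v ∈ U, N.con u v → u = v

/-- Contention lifted to sets of transitions. -/
def setCon {k l : ℕ} (N : NetB k l) (U V : Set N.T) : Prop :=
  ∃ u ∈ U, ∃ v ∈ V, N.con u v

/-- A synchronisation between `M : l → m` and `N : m → n`. -/
structure Sync {l m n : ℕ} (M : NetB l m) (N : NetB m n) where
  U : Set M.T
  V : Set N.T
  miU : MI M U
  miV : MI N V
  bd : setTgt M U = setSrc N V

def Sync.Trivial {l m n : ℕ} {M : NetB l m} {N : NetB m n} (s : Sync M N) : Prop :=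
  s.U = ∅ ∧ s.V = ∅

/-- A minimal synchronisation: non-trivial, and every componentwise-smaller
synchronisation is trivial or equal to it. -/
def Sync.Minimal {l m n : ℕ} {M : NetB l m} {N : NetB m n} (s : Sync M N) : Prop :=
  ¬ s.Trivial ∧
  ∀ s' : Sync M N, s'.U ⊆ s.U → s'.V ⊆ s.V → (s'.Trivial ∨ (s'.U = s.U ∧ s'.V = s.V))

theorem sync_finite {l m n : ℕ} (M : NetB l m) (N : NetB m n) : Finite (Sync M N) := by
  haveI := M.finT; haveI := N.finT
  apply Finite.of_injective (fun s : Sync M N => (s.U, s.V))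
  intro s s' h
  simp only [Prod.mk.injEq] at h
  obtain ⟨h1, h2⟩ := h
  cases s; cases s'
  simp_all

/-- Composition along a common boundary. -/
def comp {l m n : ℕ} (M : NetB l m) (N : NetB m n) : NetB l n where
  P := M.P ⊕ N.P
  T := {s : Sync M N // s.Minimal}
  finP := by haveI := M.finP; haveI := N.finP; exact inferInstance
  finT := by haveI := sync_finite M N; exact inferInstance
  pre s := (Sum.inl '' setPre M s.1.U) ∪ (Sum.inr '' setPre N s.1.V)
  post s := (Sum.inl '' setPost M s.1.U) ∪ (Sum.inr '' setPost N s.1.V)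
  src s := setSrc M s.1.U
  tgt s := setTgt N s.1.V
  con s s' := setCon M s.1.U s'.1.U ∨ setCon N s.1.V s'.1.V

/-- Tensor product of nets with boundaries. -/
def tensor {l m k n : ℕ} (M : NetB l m) (N : NetB k n) : NetB (l + k) (m + n) where
  P := M.P ⊕ N.P
  T := M.T ⊕ N.T
  finP := by haveI := M.finP; haveI := N.finP; exact inferInstance
  finT := by haveI := M.finT; haveI := N.finT; exact inferInstance
  pre t := match t with
    | Sum.inl t => Sum.inl '' M.pre t
    | Sum.inr t => Sum.inr '' N.pre t
  post t := match t with
    | Sum.inl t => Sum.inl '' M.post t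
    | Sum.inr t => Sum.inr '' N.post t
  src t := match t with
    | Sum.inl t => Fin.castAdd k '' M.src t
    | Sum.inr t => Fin.natAdd l '' N.src t
  tgt t := match t with
    | Sum.inl t => Fin.castAdd n '' M.tgt t
    | Sum.inr t => Fin.natAdd m '' N.tgt t
  con t u := match t, u with
    | Sum.inl t, Sum.inl u => M.con t u
    | Sum.inr t, Sum.inr u => N.con t u
    | _, _ => False

/-- Isomorphism of nets with boundaries: bijections on places and transitions
preserving pre-sets, post-sets, boundary maps and contention. -/
structure NetIso {k l : ℕ} (M N : NetB k l) where
  ep : M.P ≃ N.P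
  et : M.T ≃ N.T
  pre_eq : ∀ t, N.pre (et t) = ep '' M.pre t
  post_eq : ∀ t, N.post (et t) = ep '' M.post t
  src_eq : ∀ t, N.src (et t) = M.src t
  tgt_eq : ∀ t, N.tgt (et t) = M.tgt t
  con_iff : ∀ t u, N.con (et t) (et u) ↔ M.con t u

def Iso {k l : ℕ} (M N : NetB k l) : Prop := Nonempty (NetIso M N)

/-- Transport a net along equalities of its boundary sizes. -/
def castNet {k l k' l' : ℕ} (h1 : k = k') (h2 : l = l') (N : NetB k l) : NetB k' l' where
  P := N.P
  T := N.T
  finP := N.finP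
  finT := N.finT
  pre := N.pre
  post := N.post
  src t := Fin.cast h1 '' N.src t
  tgt t := Fin.cast h2 '' N.tgt t
  con := N.con

def emptyNet : NetB 0 0 where
  P := Empty
  T := Empty
  finP := inferInstance
  finT := inferInstance
  pre t := t.elim
  post t := t.elim
  src t := t.elim
  tgt t := t.elim
  con t _ := t.elim

/-- The step firing semantics: `Fires N X X' α β` iff the LTS `⟦N⟧` has a
transition `X →⟨α,β⟩ X'`. -/
def Fires {k l : ℕ} (N : NetB k l) (X X' : Set N.P) (α : Set (Fin k)) (β : Set (Fin l)) :
    Prop :=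
  ∃ U : Set N.T, MI N U ∧ setPre N U ⊆ X ∧ setPost N U ∩ X = ∅ ∧
    X' = (X \ setPre N U) ∪ setPost N U ∧ setSrc N U = α ∧ setTgt N U = β

/-! ### Ports, connections and networks -/

/-- The ports of a net: an in-port and an out-port for each place,
together with the left and right boundary ports. -/
def Port {k l : ℕ} (N : NetB k l) : Type := (N.P ⊕ N.P) ⊕ (Fin k ⊕ Fin l)

def portIn {k l : ℕ} {N : NetB k l} (p : N.P) : Port N := Sum.inl (Sum.inl p)
def portOut {k l : ℕ} {N : NetB k l} (p : N.P) : Port N := Sum.inl (Sum.inr p)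
def bLeft {k l : ℕ} {N : NetB k l} (i : Fin k) : Port N := Sum.inr (Sum.inl i)
def bRight {k l : ℕ} {N : NetB k l} (j : Fin l) : Port N := Sum.inr (Sum.inr j)

/-- The portset of a transition. -/
def tports {k l : ℕ} (N : NetB k l) (t : N.T) : Set (Port N) :=
  (portOut '' N.pre t) ∪ (portIn '' N.post t) ∪ (bLeft '' N.src t) ∪ (bRight '' N.tgt t)

/-- The connection of a port `q`: the portsets (minus `q`) of all transitions
properly connecting to `q`. -/
def conn {k l : ℕ} (N : NetB k l) (q : Port N) : Set (Set (Port N)) :=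
  { K | ∃ t : N.T, {q} ⊂ tports N t ∧ K = tports N t \ {q} }

/-- The connection of `q` restricted to a set `R` of ports. -/
def connR {k l : ℕ} (N : NetB k l) (R : Set (Port N)) (q : Port N) :
    Set (Set (Port N)) :=
  { K' | ∃ K ∈ conn N q, (K ∩ R).Nonempty ∧ K' = K ∩ R }

/-- Extended ports of the left part of an oriented partition. -/
def eportsL {k l : ℕ} (N : NetB k l) (Pl : Set N.P) : Set (Port N) :=
  (portIn '' Pl) ∪ (portOut '' Pl) ∪ Set.range (bLeft (N := N))

/-- Extended ports of the right part of an oriented partition. -/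
def eportsR {k l : ℕ} (N : NetB k l) (Pr : Set N.P) : Set (Port N) :=
  (portIn '' Pr) ∪ (portOut '' Pr) ∪ Set.range (bRight (N := N))

/-- The network `net(P_l → P_r)`. -/
def networkLR {k l : ℕ} (N : NetB k l) (Pl Pr : Set N.P) :
    Set (Set (Set (Port N))) :=
  { c | ∃ q ∈ eportsL N Pl, c = connR N (eportsR N Pr) q }

/-- The network `net(P_r → P_l)`. -/
def networkRL {k l : ℕ} (N : NetB k l) (Pl Pr : Set N.P) :
    Set (Set (Set (Port N))) :=
  { c | ∃ q ∈ eportsR N Pr, c = connR N (eportsL N Pl) q }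

/-- `b` is a basis of the network `M`: every connection in `M` is a union of
basis connections. -/
def IsBasis {C : Type} {m : ℕ} (b : Fin m → Set C) (M : Set (Set C)) : Prop :=
  ∀ c ∈ M, ∃ S : Finset (Fin m), c = ⋃ i ∈ S, b i

/-- The dimension of a network: the size of its smallest basis. -/
noncomputable def netDim {C : Type} (M : Set (Set C)) : ℕ :=
  sInf { m | ∃ b : Fin m → Set C, IsBasis b M }

/-- Purity of a composition `N_l ; N_r`: no transition of either component
connects to two different shared boundary ports. -/
def Pure {k n l : ℕ} (Nl : NetB k n) (Nr : NetB n l) : Prop :=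
  (∀ j : Fin n, ∀ K ∈ conn Nl (bRight j), ∀ i : Fin n, bRight i ∉ K) ∧
  (∀ j : Fin n, ∀ K ∈ conn Nr (bLeft j), ∀ i : Fin n, bLeft i ∉ K)

/-! ### Wiring expressions and decompositions -/

/-- Nets with boundaries of arbitrary boundary sizes. -/
def NetS : Type 1 := Σ (k : ℕ) (l : ℕ), NetB k l

/-- Composition on `NetS` (junk value on boundary mismatch). -/
def seqS (X Y : NetS) : NetS :=
  if h : X.2.1 = Y.1 then ⟨X.1, Y.2.1, comp (castNet rfl h X.2.2) Y.2.2⟩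
  else ⟨0, 0, emptyNet⟩

def tenS (X Y : NetS) : NetS := ⟨X.1 + Y.1, X.2.1 + Y.2.1, tensor X.2.2 Y.2.2⟩

/-- Wiring expressions: binary trees with `;` and `⊗` nodes and variables at
the leaves. -/
inductive WExpr (V : Type) : Type
  | leaf : V → WExpr V
  | seq : WExpr V → WExpr V → WExpr V
  | ten : WExpr V → WExpr V → WExpr V

/-- Semantics of a wiring expression under a variable assignment. -/
def sem {V : Type} (A : V → NetS) : WExpr V → NetS
  | .leaf x => A x
  | .seq t₁ t₂ => seqS (sem A t₁) (sem A t₂)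
  | .ten t₁ t₂ => tenS (sem A t₁) (sem A t₂)

/-- Compatibility of an assignment with an expression: at each `;` node the
shared boundaries match. -/
def WT {V : Type} (A : V → NetS) : WExpr V → Prop
  | .leaf _ => True
  | .seq t₁ t₂ => WT A t₁ ∧ WT A t₂ ∧ (sem A t₁).2.1 = (sem A t₂).1
  | .ten t₁ t₂ => WT A t₁ ∧ WT A t₂

/-- The wiring decomposition `(t, A)` has width `w`: every leaf net has
boundaries and number of places `≤ w`, and every subexpression has
boundaries `≤ w`. -/
def HasWidth {V : Type} (A : V → NetS) (w : ℕ) : WExpr V → Prop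
  | .leaf x => (A x).1 ≤ w ∧ Nat.card (A x).2.2.P ≤ w ∧ (A x).2.1 ≤ w
  | .seq t₁ t₂ => HasWidth A w t₁ ∧ HasWidth A w t₂ ∧
      (sem A (.seq t₁ t₂)).1 ≤ w ∧ (sem A (.seq t₁ t₂)).2.1 ≤ w
  | .ten t₁ t₂ => HasWidth A w t₁ ∧ HasWidth A w t₂ ∧
      (sem A (.ten t₁ t₂)).1 ≤ w ∧ (sem A (.ten t₁ t₂)).2.1 ≤ w

/-- `(t, A)` is a wiring decomposition of `N : k → l`: the assignment maps
variables to genuine nets with boundaries, is compatible with `t`, and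
`⟦t⟧_A ≅ N`. -/
def IsDecompOf {V : Type} {k l : ℕ} (A : V → NetS) (t : WExpr V) (N : NetB k l) : Prop :=
  (∀ x, IsContention (A x).2.2) ∧ WT A t ∧
  ∃ (h1 : (sem A t).1 = k) (h2 : (sem A t).2.1 = l),
    Iso (castNet h1 h2 (sem A t).2.2) N

/-- A net has decomposition width `w` if it has a wiring decomposition of
width `w`. -/
def HasDecompWidth {k l : ℕ} (N : NetB k l) (w : ℕ) : Prop :=
  ∃ (Var : Type) (A : Var → NetS) (t : WExpr Var),
    IsDecompOf A t N ∧ HasWidth A w t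

/-- A pure wiring decomposition: at every `;` node the composition of the two
subexpression nets is pure. -/
def PureExpr {V : Type} (A : V → NetS) : WExpr V → Prop
  | .leaf _ => True
  | .seq t₁ t₂ => PureExpr A t₁ ∧ PureExpr A t₂ ∧
      ∀ (h : (sem A t₁).2.1 = (sem A t₂).1),
        Pure (castNet rfl h (sem A t₁).2.2) (sem A t₂).2.2
  | .ten t₁ t₂ => PureExpr A t₁ ∧ PureExpr A t₂

/-- One step of reassociation of `;` or `⊗`, anywhere inside an expression. -/
inductive AssocStep {V : Type} : WExpr V → WExpr V → Prop
  | seqAssoc (a b c : WExpr V) : AssocStep (.seq (.seq a b) c) (.seq a (.seq b c))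
  | tenAssoc (a b c : WExpr V) : AssocStep (.ten (.ten a b) c) (.ten a (.ten b c))
  | seqCongrL {a a' : WExpr V} (b : WExpr V) :
      AssocStep a a' → AssocStep (.seq a b) (.seq a' b)
  | seqCongrR (a : WExpr V) {b b' : WExpr V} :
      AssocStep b b' → AssocStep (.seq a b) (.seq a b')
  | tenCongrL {a a' : WExpr V} (b : WExpr V) :
      AssocStep a a' → AssocStep (.ten a b) (.ten a' b)
  | tenCongrR (a : WExpr V) {b b' : WExpr V} :
      AssocStep b b' → AssocStep (.ten a b) (.ten a b')

/-- Equivalence of wiring expressions up to associativity of `;` and `⊗`. -/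
def AssocEquiv {V : Type} : WExpr V → WExpr V → Prop := Relation.EqvGen AssocStep

/-! ### Concrete families of nets -/

/-- The clique net `C_n : 0 → 0`, with the minimal contention relation. -/
def clique (n : ℕ) : NetB 0 0 where
  P := Fin n
  T := {p : Fin n × Fin n // p.1 ≠ p.2}
  finP := inferInstance
  finT := inferInstance
  pre t := {t.1.1}
  post t := {t.1.2}
  src _ := ∅
  tgt _ := ∅
  con t u := t.1.1 = u.1.1 ∨ t.1.2 = u.1.2

/-- The subset net `P_n : 0 → 0`: a place `S` (= `none`), places `[n]`, and for
each `A ⊆ [n]` a transition `S → A`; the minimal contention relation is total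
since all pre-sets are `{S}`. -/
def subsetNet (n : ℕ) : NetB 0 0 where
  P := Option (Fin n)
  T := Set (Fin n)
  finP := inferInstance
  finT := inferInstance
  pre _ := {none}
  post A := some '' A
  src _ := ∅
  tgt _ := ∅
  con _ _ := True

/-- The tree net `T_Δ^{n,k} : 0 → 0`: places are nodes of the complete n-ary
tree of depth k (lists over `Fin n` of length ≤ k); each non-leaf node has a
single transition to the set of its n children. The minimal contention
relation is equality. -/
def treeD (n k : ℕ) : NetB 0 0 where
  P := {l : List (Fin n) // l.length ≤ k}
  T := {l : List (Fin n) // l.length < k}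
  finP := (List.finite_length_le (Fin n) k).to_subtype
  finT := (List.finite_length_lt (Fin n) k).to_subtype
  pre t := {⟨t.1, t.2.le⟩}
  post t := {p | ∃ i : Fin n, p.1 = t.1 ++ [i]}
  src _ := ∅
  tgt _ := ∅
  con t u := t = u

/-- The tree net `T_Λ^{n,k} : 0 → 0`: as `T_Δ^{n,k}` but with a separate
transition from each non-leaf node to each of its children. The minimal
contention relation relates transitions with the same parent node. -/
def treeL (n k : ℕ) : NetB 0 0 where
  P := {l : List (Fin n) // l.length ≤ k}
  T := {l : List (Fin n) // l.length < k} × Fin n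
  finP := (List.finite_length_le (Fin n) k).to_subtype
  finT := by
    haveI : Finite {l : List (Fin n) // l.length < k} :=
      (List.finite_length_lt (Fin n) k).to_subtype
    exact inferInstance
  pre t := {⟨t.1.1, t.1.2.le⟩}
  post t := {p | p.1 = t.1.1 ++ [t.2]}
  src _ := ∅
  tgt _ := ∅
  con t u := t.1 = u.1

/-- The grid net `G_n : 0 → 0`: places `[n] × [n]`, a transition from each
place to its right neighbour and to its lower neighbour; the minimal
contention relation relates transitions sharing a pre-place or post-place. -/
def grid (n : ℕ) : NetB 0 0 where
  P := Fin n × Fin n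
  T := {e : (Fin n × Fin n) × (Fin n × Fin n) //
        (e.2.1 = e.1.1 ∧ (e.2.2 : ℕ) = (e.1.2 : ℕ) + 1) ∨
        ((e.2.1 : ℕ) = (e.1.1 : ℕ) + 1 ∧ e.2.2 = e.1.2)}
  finP := inferInstance
  finT := inferInstance
  pre e := {e.1.1}
  post e := {e.1.2}
  src _ := ∅
  tgt _ := ∅
  con t u := t.1.1 = u.1.1 ∨ t.1.2 = u.1.2

end NWB

namespace NWB

variable {k n l : ℕ}

/-- Transport of a portset of `N_r` to a portset of `N` along the witnessing
isomorphism: place ports go via the isomorphism (and the right injection),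
right boundary ports of `N_r` are right boundary ports of `N`.  (In a pure
decomposition no other ports occur in the relevant portsets.) -/
def liftSetR (Nl : NetB k n) (Nr : NetB n l) (N : NetB k l)
    (iso : NetIso (comp Nl Nr) N) (K : Set (Port Nr)) : Set (Port N) :=
  { q | (∃ p : Nr.P, portIn p ∈ K ∧ q = portIn (iso.ep (Sum.inr p))) ∨
        (∃ p : Nr.P, portOut p ∈ K ∧ q = portOut (iso.ep (Sum.inr p))) ∨
        (∃ j : Fin l, bRight j ∈ K ∧ q = bRight j) }

/-- Transport of a portset of `N_l` to a portset of `N`, symmetrically. -/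
def liftSetL (Nl : NetB k n) (Nr : NetB n l) (N : NetB k l)
    (iso : NetIso (comp Nl Nr) N) (K : Set (Port Nl)) : Set (Port N) :=
  { q | (∃ p : Nl.P, portIn p ∈ K ∧ q = portIn (iso.ep (Sum.inl p))) ∨
        (∃ p : Nl.P, portOut p ∈ K ∧ q = portOut (iso.ep (Sum.inl p))) ∨
        (∃ i : Fin k, bLeft i ∈ K ∧ q = bLeft i) }

/-- `bconn^{N_r}(i)`, the connection of the shared boundary port `i` computed
in `N_r`, viewed as a connection of `N`. -/
def bconnR (Nl : NetB k n) (Nr : NetB n l) (N : NetB k l)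
    (iso : NetIso (comp Nl Nr) N) (i : Fin n) : Set (Set (Port N)) :=
  liftSetR Nl Nr N iso '' conn Nr (bLeft i)

/-- `bconn^{N_l}(i)`, the connection of the shared boundary port `i` computed
in `N_l`, viewed as a connection of `N`. -/
def bconnL (Nl : NetB k n) (Nr : NetB n l) (N : NetB k l)
    (iso : NetIso (comp Nl Nr) N) (i : Fin n) : Set (Set (Port N)) :=
  liftSetL Nl Nr N iso '' conn Nl (bRight i)

/-- The left part of the oriented partition of the places of `N` induced by
the witnessing isomorphism. -/
def partL (Nl : NetB k n) (Nr : NetB n l) (N : NetB k l)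
    (iso : NetIso (comp Nl Nr) N) : Set N.P :=
  Set.range (fun p : Nl.P => iso.ep (Sum.inl p))

/-- The right part of the induced oriented partition. -/
def partR (Nl : NetB k n) (Nr : NetB n l) (N : NetB k l)
    (iso : NetIso (comp Nl Nr) N) : Set N.P :=
  Set.range (fun p : Nr.P => iso.ep (Sum.inr p))

end NWB

namespace NWB

/-! ### Auxiliary lemmas for the lower bound -/

section AuxPorts

variable {a b : ℕ} {M : NetB a b}

@[simp] lemma portIn_inj {p q : M.P} : (portIn p : Port M) = portIn q ↔ p = q :=
  ⟨fun h => Sum.inl_injective (Sum.inl_injective h), fun h => by rw [h]⟩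

@[simp] lemma portOut_inj {p q : M.P} : (portOut p : Port M) = portOut q ↔ p = q :=
  ⟨fun h => Sum.inr_injective (Sum.inl_injective h), fun h => by rw [h]⟩

@[simp] lemma bLeft_inj {i j : Fin a} : (bLeft i : Port M) = bLeft j ↔ i = j :=
  ⟨fun h => Sum.inl_injective (Sum.inr_injective h), fun h => by rw [h]⟩

@[simp] lemma bRight_inj {i j : Fin b} : (bRight i : Port M) = bRight j ↔ i = j :=
  ⟨fun h => Sum.inr_injective (Sum.inr_injective h), fun h => by rw [h]⟩

@[simp] lemma portIn_ne_portOut {p q : M.P} : (portIn p : Port M) ≠ portOut q :=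
  fun h => Sum.inl_ne_inr (Sum.inl_injective h)

@[simp] lemma portOut_ne_portIn {p q : M.P} : (portOut p : Port M) ≠ portIn q :=
  fun h => Sum.inr_ne_inl (Sum.inl_injective h)

@[simp] lemma portIn_ne_bLeft {p : M.P} {i : Fin a} : (portIn p : Port M) ≠ bLeft i :=
  fun h => Sum.inl_ne_inr h

@[simp] lemma bLeft_ne_portIn {p : M.P} {i : Fin a} : (bLeft i : Port M) ≠ portIn p :=
  fun h => Sum.inr_ne_inl h

@[simp] lemma portIn_ne_bRight {p : M.P} {j : Fin b} : (portIn p : Port M) ≠ bRight j :=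
  fun h => Sum.inl_ne_inr h

@[simp] lemma bRight_ne_portIn {p : M.P} {j : Fin b} : (bRight j : Port M) ≠ portIn p :=
  fun h => Sum.inr_ne_inl h

@[simp] lemma portOut_ne_bLeft {p : M.P} {i : Fin a} : (portOut p : Port M) ≠ bLeft i :=
  fun h => Sum.inl_ne_inr h

@[simp] lemma bLeft_ne_portOut {p : M.P} {i : Fin a} : (bLeft i : Port M) ≠ portOut p :=
  fun h => Sum.inr_ne_inl h

@[simp] lemma portOut_ne_bRight {p : M.P} {j : Fin b} : (portOut p : Port M) ≠ bRight j :=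
  fun h => Sum.inl_ne_inr h

@[simp] lemma bRight_ne_portOut {p : M.P} {j : Fin b} : (bRight j : Port M) ≠ portOut p :=
  fun h => Sum.inr_ne_inl h

@[simp] lemma bLeft_ne_bRight {i : Fin a} {j : Fin b} : (bLeft i : Port M) ≠ bRight j :=
  fun h => Sum.inl_ne_inr (Sum.inr_injective h)

@[simp] lemma bRight_ne_bLeft {i : Fin a} {j : Fin b} : (bRight j : Port M) ≠ bLeft i :=
  fun h => Sum.inr_ne_inl (Sum.inr_injective h)

lemma mem_tports {t : M.T} {x : Port M} :
    x ∈ tports M t ↔ (∃ p ∈ M.pre t, x = portOut p) ∨ (∃ p ∈ M.post t, x = portIn p) ∨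
      (∃ i ∈ M.src t, x = bLeft i) ∨ (∃ j ∈ M.tgt t, x = bRight j) := by
  simp only [tports, Set.mem_union, Set.mem_image]
  constructor
  · rintro (((⟨p, hp, rfl⟩ | ⟨p, hp, rfl⟩) | ⟨i, hi, rfl⟩) | ⟨j, hj, rfl⟩)
    exacts [Or.inl ⟨p, hp, rfl⟩, Or.inr (Or.inl ⟨p, hp, rfl⟩),
      Or.inr (Or.inr (Or.inl ⟨i, hi, rfl⟩)), Or.inr (Or.inr (Or.inr ⟨j, hj, rfl⟩))]
  · rintro (⟨p, hp, rfl⟩ | ⟨p, hp, rfl⟩ | ⟨i, hi, rfl⟩ | ⟨j, hj, rfl⟩)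
    exacts [Or.inl (Or.inl (Or.inl ⟨p, hp, rfl⟩)), Or.inl (Or.inl (Or.inr ⟨p, hp, rfl⟩)),
      Or.inl (Or.inr ⟨i, hi, rfl⟩), Or.inr ⟨j, hj, rfl⟩]

@[simp] lemma portOut_mem_tports {t : M.T} {p : M.P} :
    (portOut p : Port M) ∈ tports M t ↔ p ∈ M.pre t := by
  rw [mem_tports]; simp [eq_comm]

@[simp] lemma portIn_mem_tports {t : M.T} {p : M.P} :
    (portIn p : Port M) ∈ tports M t ↔ p ∈ M.post t := by
  rw [mem_tports]; simp [eq_comm]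

@[simp] lemma bLeft_mem_tports {t : M.T} {i : Fin a} :
    (bLeft i : Port M) ∈ tports M t ↔ i ∈ M.src t := by
  rw [mem_tports]; simp [eq_comm]

@[simp] lemma bRight_mem_tports {t : M.T} {j : Fin b} :
    (bRight j : Port M) ∈ tports M t ↔ j ∈ M.tgt t := by
  rw [mem_tports]; simp [eq_comm]

end AuxPorts

section Aux

variable {k n l : ℕ} {N₁ : NetB k n} {N₂ : NetB n l} {N : NetB k l}

lemma Sync.ext' {s s' : Sync N₁ N₂} (hU : s.U = s'.U) (hV : s.V = s'.V) : s = s' := by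
  cases s; cases s'; simp_all

lemma tgt_subsingleton (hpure : Pure N₁ N₂) (u : N₁.T) : (N₁.tgt u).Subsingleton := by
  intro i hi j hj
  by_contra hij
  refine hpure.1 i (tports N₁ u \ {bRight i}) ⟨u, ?_, rfl⟩ j
    ⟨by simpa using hj, by simpa using Ne.symm hij⟩
  rw [Set.ssubset_iff_of_subset (Set.singleton_subset_iff.2 (by simpa using hi))]
  exact ⟨bRight j, by simpa using hj, by simpa using Ne.symm hij⟩

lemma src_subsingleton (hpure : Pure N₁ N₂) (v : N₂.T) : (N₂.src v).Subsingleton := by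
  intro i hi j hj
  by_contra hij
  refine hpure.2 i (tports N₂ v \ {bLeft i}) ⟨v, ?_, rfl⟩ j
    ⟨by simpa using hj, by simpa using Ne.symm hij⟩
  rw [Set.ssubset_iff_of_subset (Set.singleton_subset_iff.2 (by simpa using hi))]
  exact ⟨bLeft j, by simpa using hj, by simpa using Ne.symm hij⟩

/-- The synchronisation pairing a single transition of `N₁` with a single
transition of `N₂` over a single shared boundary port. -/
def pairSync (u : N₁.T) (v : N₂.T) (i : Fin n)
    (hu : N₁.tgt u = {i}) (hv : N₂.src v = {i}) : Sync N₁ N₂ :=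
  ⟨{u}, {v},
    fun a ha b hb _ => by rw [Set.eq_of_mem_singleton ha, Set.eq_of_mem_singleton hb],
    fun a ha b hb _ => by rw [Set.eq_of_mem_singleton ha, Set.eq_of_mem_singleton hb],
    by simp [setTgt, setSrc, hu, hv]⟩

lemma pairSync_minimal (u : N₁.T) (v : N₂.T) (i : Fin n)
    (hu : N₁.tgt u = {i}) (hv : N₂.src v = {i}) : (pairSync u v i hu hv).Minimal := by
  constructor
  · rintro ⟨h1, -⟩
    exact Set.singleton_ne_empty u h1
  · intro s' hU hV
    rcases Set.subset_singleton_iff_eq.1 hU with h0 | h1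
    · left
      refine ⟨h0, ?_⟩
      rcases Set.subset_singleton_iff_eq.1 hV with h0' | h1'
      · exact h0'
      · exfalso
        have hiv : i ∈ setSrc N₂ s'.V := by
          rw [h1']; simp [setSrc, hv]
        rw [← s'.bd, h0] at hiv
        simp [setTgt] at hiv
    · right
      refine ⟨h1, ?_⟩
      rcases Set.subset_singleton_iff_eq.1 hV with h0' | h1'
      · exfalso
        have hiu : i ∈ setTgt N₁ s'.U := by
          rw [h1]; simp [setTgt, hu]
        rw [s'.bd, h0'] at hiu
        simp [setSrc] at hiu
      · exact h1'

/-- The transition of `N` corresponding to a pair synchronisation. -/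
def pairT (iso : NetIso (comp N₁ N₂) N) (u : N₁.T) (v : N₂.T) (i : Fin n)
    (hu : N₁.tgt u = {i}) (hv : N₂.src v = {i}) : N.T :=
  iso.et ⟨pairSync u v i hu hv, pairSync_minimal u v i hu hv⟩

lemma mem_tports_comp (iso : NetIso (comp N₁ N₂) N)
    {t₀ : {s : Sync N₁ N₂ // s.Minimal}} {x : Port N} :
    x ∈ tports N (iso.et t₀) ↔
      (∃ p ∈ setPre N₁ t₀.1.U, x = portOut (iso.ep (Sum.inl p))) ∨
      (∃ p ∈ setPre N₂ t₀.1.V, x = portOut (iso.ep (Sum.inr p))) ∨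
      (∃ p ∈ setPost N₁ t₀.1.U, x = portIn (iso.ep (Sum.inl p))) ∨
      (∃ p ∈ setPost N₂ t₀.1.V, x = portIn (iso.ep (Sum.inr p))) ∨
      (∃ i ∈ setSrc N₁ t₀.1.U, x = bLeft i) ∨
      (∃ j ∈ setTgt N₂ t₀.1.V, x = bRight j) := by
  rw [mem_tports]
  have hpre : N.pre (iso.et t₀) =
      iso.ep '' (Sum.inl '' setPre N₁ t₀.1.U ∪ Sum.inr '' setPre N₂ t₀.1.V) := iso.pre_eq t₀
  have hpost : N.post (iso.et t₀) =
      iso.ep '' (Sum.inl '' setPost N₁ t₀.1.U ∪ Sum.inr '' setPost N₂ t₀.1.V) := iso.post_eq t₀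
  have hsrc : N.src (iso.et t₀) = setSrc N₁ t₀.1.U := iso.src_eq t₀
  have htgt : N.tgt (iso.et t₀) = setTgt N₂ t₀.1.V := iso.tgt_eq t₀
  rw [hpre, hpost, hsrc, htgt]
  simp only [Set.image_union, Set.image_image, Set.mem_union, Set.mem_image]
  constructor
  · rintro (⟨p, (⟨_, ⟨a, ha, rfl⟩, rfl⟩ | ⟨_, ⟨a, ha, rfl⟩, rfl⟩), rfl⟩ |
      ⟨p, (⟨_, ⟨a, ha, rfl⟩, rfl⟩ | ⟨_, ⟨a, ha, rfl⟩, rfl⟩), rfl⟩ |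
      ⟨i, hi, rfl⟩ | ⟨j, hj, rfl⟩)
    exacts [Or.inl ⟨a, ha, rfl⟩, Or.inr (Or.inl ⟨a, ha, rfl⟩),
      Or.inr (Or.inr (Or.inl ⟨a, ha, rfl⟩)), Or.inr (Or.inr (Or.inr (Or.inl ⟨a, ha, rfl⟩))),
      Or.inr (Or.inr (Or.inr (Or.inr (Or.inl ⟨i, hi, rfl⟩)))),
      Or.inr (Or.inr (Or.inr (Or.inr (Or.inr ⟨j, hj, rfl⟩))))]
  · rintro (⟨a, ha, rfl⟩ | ⟨a, ha, rfl⟩ | ⟨a, ha, rfl⟩ | ⟨a, ha, rfl⟩ | ⟨i, hi, rfl⟩ | ⟨j, hj, rfl⟩)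
    exacts [Or.inl ⟨_, Or.inl ⟨_, ⟨a, ha, rfl⟩, rfl⟩, rfl⟩, Or.inl ⟨_, Or.inr ⟨_, ⟨a, ha, rfl⟩, rfl⟩, rfl⟩,
      Or.inr (Or.inl ⟨_, Or.inl ⟨_, ⟨a, ha, rfl⟩, rfl⟩, rfl⟩),
      Or.inr (Or.inl ⟨_, Or.inr ⟨_, ⟨a, ha, rfl⟩, rfl⟩, rfl⟩),
      Or.inr (Or.inr (Or.inl ⟨i, hi, rfl⟩)), Or.inr (Or.inr (Or.inr ⟨j, hj, rfl⟩))]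

lemma mem_tports_pair (iso : NetIso (comp N₁ N₂) N) {u : N₁.T} {v : N₂.T} {i : Fin n}
    {hu : N₁.tgt u = {i}} {hv : N₂.src v = {i}} {x : Port N} :
    x ∈ tports N (pairT iso u v i hu hv) ↔
      (∃ p ∈ N₁.pre u, x = portOut (iso.ep (Sum.inl p))) ∨
      (∃ p ∈ N₂.pre v, x = portOut (iso.ep (Sum.inr p))) ∨
      (∃ p ∈ N₁.post u, x = portIn (iso.ep (Sum.inl p))) ∨
      (∃ p ∈ N₂.post v, x = portIn (iso.ep (Sum.inr p))) ∨
      (∃ i' ∈ N₁.src u, x = bLeft i') ∨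
      (∃ j ∈ N₂.tgt v, x = bRight j) := by
  rw [pairT, mem_tports_comp iso]
  simp [pairSync, setPre, setPost, setSrc, setTgt]

/-- `x` is a "left" port of `N`. -/
def isL (iso : NetIso (comp N₁ N₂) N) (x : Port N) : Prop :=
  (∃ p : N₁.P, portIn (iso.ep (Sum.inl p)) = x) ∨
  (∃ p : N₁.P, portOut (iso.ep (Sum.inl p)) = x) ∨
  (∃ i : Fin k, bLeft i = x)

/-- `x` is a "right" port of `N`. -/
def isR (iso : NetIso (comp N₁ N₂) N) (x : Port N) : Prop :=
  (∃ p : N₂.P, portIn (iso.ep (Sum.inr p)) = x) ∨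
  (∃ p : N₂.P, portOut (iso.ep (Sum.inr p)) = x) ∨
  (∃ j : Fin l, bRight j = x)

lemma mem_L_iff (iso : NetIso (comp N₁ N₂) N) {x : Port N} :
    x ∈ eportsL N (partL N₁ N₂ N iso) ↔ isL iso x := by
  simp only [eportsL, partL, isL, Set.mem_union, Set.mem_image, Set.mem_range]
  constructor
  · rintro ((⟨a, ⟨p, rfl⟩, rfl⟩ | ⟨a, ⟨p, rfl⟩, rfl⟩) | ⟨i, rfl⟩)
    exacts [Or.inl ⟨p, rfl⟩, Or.inr (Or.inl ⟨p, rfl⟩), Or.inr (Or.inr ⟨i, rfl⟩)]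
  · rintro (⟨p, rfl⟩ | ⟨p, rfl⟩ | ⟨i, rfl⟩)
    exacts [Or.inl (Or.inl ⟨_, ⟨p, rfl⟩, rfl⟩), Or.inl (Or.inr ⟨_, ⟨p, rfl⟩, rfl⟩),
      Or.inr ⟨i, rfl⟩]

lemma mem_R_iff (iso : NetIso (comp N₁ N₂) N) {x : Port N} :
    x ∈ eportsR N (partR N₁ N₂ N iso) ↔ isR iso x := by
  simp only [eportsR, partR, isR, Set.mem_union, Set.mem_image, Set.mem_range]
  constructor
  · rintro ((⟨a, ⟨p, rfl⟩, rfl⟩ | ⟨a, ⟨p, rfl⟩, rfl⟩) | ⟨j, rfl⟩)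
    exacts [Or.inl ⟨p, rfl⟩, Or.inr (Or.inl ⟨p, rfl⟩), Or.inr (Or.inr ⟨j, rfl⟩)]
  · rintro (⟨p, rfl⟩ | ⟨p, rfl⟩ | ⟨j, rfl⟩)
    exacts [Or.inl (Or.inl ⟨_, ⟨p, rfl⟩, rfl⟩), Or.inl (Or.inr ⟨_, ⟨p, rfl⟩, rfl⟩),
      Or.inr ⟨j, rfl⟩]

lemma not_isL_isR (iso : NetIso (comp N₁ N₂) N) {x : Port N}
    (hL : isL iso x) (hR : isR iso x) : False := by
  rcases hL with ⟨p, rfl⟩ | ⟨p, rfl⟩ | ⟨i, rfl⟩ <;>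
    rcases hR with ⟨p', h⟩ | ⟨p', h⟩ | ⟨j, h⟩ <;>
    simp only [portIn_inj, portOut_inj, portIn_ne_portOut, portOut_ne_portIn,
      portIn_ne_bLeft, bLeft_ne_portIn, portOut_ne_bLeft, bLeft_ne_portOut,
      portIn_ne_bRight, bRight_ne_portIn, portOut_ne_bRight, bRight_ne_portOut,
      bLeft_ne_bRight, bRight_ne_bLeft] at h
  all_goals exact absurd (iso.ep.injective h) (by simp)

lemma ne_of_R_L (iso : NetIso (comp N₁ N₂) N) {x q : Port N}
    (hx : isR iso x) (hq : isL iso q) : x ≠ q := by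
  rintro rfl; exact not_isL_isR iso hq hx

lemma ne_of_L_R (iso : NetIso (comp N₁ N₂) N) {x q : Port N}
    (hx : isL iso x) (hq : isR iso q) : x ≠ q := by
  rintro rfl; exact not_isL_isR iso hx hq

end Aux

section Aux2

variable {k n l : ℕ} {N₁ : NetB k n} {N₂ : NetB n l} {N : NetB k l}

lemma caseV_empty (iso : NetIso (comp N₁ N₂) N) {t₀ : {s : Sync N₁ N₂ // s.Minimal}}
    (h : t₀.1.V = ∅) (q : Port N) :
    (tports N (iso.et t₀) \ {q}) ∩ eportsR N (partR N₁ N₂ N iso) = ∅ := by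
  rw [Set.eq_empty_iff_forall_notMem]
  rintro x ⟨⟨hx, -⟩, hR⟩
  rw [mem_tports_comp iso] at hx
  rw [mem_R_iff iso] at hR
  rcases hx with ⟨p, hp, rfl⟩ | ⟨p, hp, rfl⟩ | ⟨p, hp, rfl⟩ | ⟨p, hp, rfl⟩ |
    ⟨i, hi, rfl⟩ | ⟨j, hj, rfl⟩
  · exact not_isL_isR iso (Or.inr (Or.inl ⟨p, rfl⟩)) hR
  · simp [setPre, h] at hp
  · exact not_isL_isR iso (Or.inl ⟨p, rfl⟩) hR
  · simp [setPost, h] at hp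
  · exact not_isL_isR iso (Or.inr (Or.inr ⟨i, rfl⟩)) hR
  · simp [setTgt, h] at hj

lemma caseU_empty (iso : NetIso (comp N₁ N₂) N) {t₀ : {s : Sync N₁ N₂ // s.Minimal}}
    (h : t₀.1.U = ∅) {q : Port N} (hq : q ∈ eportsL N (partL N₁ N₂ N iso)) :
    q ∉ tports N (iso.et t₀) := by
  intro hmem
  have hqL := (mem_L_iff iso).1 hq
  rw [mem_tports_comp iso] at hmem
  rcases hmem with ⟨p, hp, rfl⟩ | ⟨p, hp, rfl⟩ | ⟨p, hp, rfl⟩ | ⟨p, hp, rfl⟩ |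
    ⟨i, hi, rfl⟩ | ⟨j, hj, rfl⟩
  · simp [setPre, h] at hp
  · exact not_isL_isR iso hqL (Or.inr (Or.inl ⟨p, rfl⟩))
  · simp [setPost, h] at hp
  · exact not_isL_isR iso hqL (Or.inl ⟨p, rfl⟩)
  · simp [setSrc, h] at hi
  · exact not_isL_isR iso hqL (Or.inr (Or.inr ⟨j, rfl⟩))

lemma caseU_empty_R (iso : NetIso (comp N₁ N₂) N) {t₀ : {s : Sync N₁ N₂ // s.Minimal}}
    (h : t₀.1.U = ∅) (q : Port N) :
    (tports N (iso.et t₀) \ {q}) ∩ eportsL N (partL N₁ N₂ N iso) = ∅ := by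
  rw [Set.eq_empty_iff_forall_notMem]
  rintro x ⟨⟨hx, -⟩, hL⟩
  rw [mem_tports_comp iso] at hx
  rw [mem_L_iff iso] at hL
  rcases hx with ⟨p, hp, rfl⟩ | ⟨p, hp, rfl⟩ | ⟨p, hp, rfl⟩ | ⟨p, hp, rfl⟩ |
    ⟨i, hi, rfl⟩ | ⟨j, hj, rfl⟩
  · simp [setPre, h] at hp
  · exact not_isL_isR iso hL (Or.inr (Or.inl ⟨p, rfl⟩))
  · simp [setPost, h] at hp
  · exact not_isL_isR iso hL (Or.inl ⟨p, rfl⟩)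
  · simp [setSrc, h] at hi
  · exact not_isL_isR iso hL (Or.inr (Or.inr ⟨j, rfl⟩))

lemma caseV_notmem (iso : NetIso (comp N₁ N₂) N) {t₀ : {s : Sync N₁ N₂ // s.Minimal}}
    (h : t₀.1.V = ∅) {q : Port N} (hq : q ∈ eportsR N (partR N₁ N₂ N iso)) :
    q ∉ tports N (iso.et t₀) := by
  intro hmem
  have hqR := (mem_R_iff iso).1 hq
  rw [mem_tports_comp iso] at hmem
  rcases hmem with ⟨p, hp, rfl⟩ | ⟨p, hp, rfl⟩ | ⟨p, hp, rfl⟩ | ⟨p, hp, rfl⟩ |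
    ⟨i, hi, rfl⟩ | ⟨j, hj, rfl⟩
  · exact not_isL_isR iso (Or.inr (Or.inl ⟨p, rfl⟩)) hqR
  · simp [setPre, h] at hp
  · exact not_isL_isR iso (Or.inl ⟨p, rfl⟩) hqR
  · simp [setPost, h] at hp
  · exact not_isL_isR iso (Or.inr (Or.inr ⟨i, rfl⟩)) hqR
  · simp [setTgt, h] at hj

lemma minimal_shape (hpure : Pure N₁ N₂) (s : Sync N₁ N₂) (hs : s.Minimal) :
    s.V = ∅ ∨ s.U = ∅ ∨ ∃ (u : N₁.T) (v : N₂.T) (i : Fin n) (hu : N₁.tgt u = {i})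
      (hv : N₂.src v = {i}), s.U = {u} ∧ s.V = {v} := by
  by_cases hV : s.V = ∅
  · exact Or.inl hV
  by_cases hU : s.U = ∅
  · exact Or.inr (Or.inl hU)
  obtain ⟨v, hv⟩ := Set.nonempty_iff_ne_empty.2 hV
  by_cases hsv : N₂.src v = ∅
  · exfalso
    have mi : MI N₂ {v} := fun a ha b hb _ => by
      rw [Set.eq_of_mem_singleton ha, Set.eq_of_mem_singleton hb]
    have bd : setTgt N₁ (∅ : Set N₁.T) = setSrc N₂ {v} := by
      simp [setTgt, setSrc, hsv]
    rcases hs.2 ⟨∅, {v}, fun a ha => absurd ha (Set.notMem_empty a), mi, bd⟩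
        (Set.empty_subset _) (Set.singleton_subset_iff.2 hv) with htriv | ⟨hU', hV'⟩
    · exact Set.singleton_ne_empty v htriv.2
    · exact hU hU'.symm
  · obtain ⟨i, hi⟩ := Set.nonempty_iff_ne_empty.2 hsv
    have hiV : i ∈ setSrc N₂ s.V := Set.mem_biUnion hv hi
    rw [← s.bd] at hiV
    simp only [setTgt, Set.mem_iUnion, exists_prop] at hiV
    obtain ⟨u, hu, hiu⟩ := hiV
    have htu : N₁.tgt u = {i} := Set.eq_singleton_iff_unique_mem.2
      ⟨hiu, fun x hx => tgt_subsingleton hpure u hx hiu⟩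
    have hsv' : N₂.src v = {i} := Set.eq_singleton_iff_unique_mem.2
      ⟨hi, fun x hx => src_subsingleton hpure v hx hi⟩
    rcases hs.2 (pairSync u v i htu hsv') (Set.singleton_subset_iff.2 hu)
        (Set.singleton_subset_iff.2 hv) with htriv | ⟨hU', hV'⟩
    · exact absurd htriv.1 (Set.singleton_ne_empty u)
    · exact Or.inr (Or.inr ⟨u, v, i, htu, hsv', hU'.symm, hV'.symm⟩)

lemma pair_inter_R (iso : NetIso (comp N₁ N₂) N) {u : N₁.T} {v : N₂.T} {i : Fin n}
    {hu : N₁.tgt u = {i}} {hv : N₂.src v = {i}} {q : Port N}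
    (hq : q ∈ eportsL N (partL N₁ N₂ N iso)) :
    (tports N (pairT iso u v i hu hv) \ {q}) ∩ eportsR N (partR N₁ N₂ N iso) =
      liftSetR N₁ N₂ N iso (tports N₂ v \ {bLeft i}) := by
  have hqL := (mem_L_iff iso).1 hq
  ext x
  simp only [Set.mem_inter_iff, Set.mem_diff, Set.mem_singleton_iff, mem_tports_pair iso,
    mem_R_iff iso, liftSetR, Set.mem_setOf_eq]
  constructor
  · rintro ⟨⟨hforms, -⟩, hR⟩
    rcases hforms with ⟨p, hp, rfl⟩ | ⟨p, hp, rfl⟩ | ⟨p, hp, rfl⟩ | ⟨p, hp, rfl⟩ |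
      ⟨i', hi', rfl⟩ | ⟨j, hj, rfl⟩
    · exact (not_isL_isR iso (Or.inr (Or.inl ⟨p, rfl⟩)) hR).elim
    · exact Or.inr (Or.inl ⟨p, ⟨by simpa using hp, by simp⟩, rfl⟩)
    · exact (not_isL_isR iso (Or.inl ⟨p, rfl⟩) hR).elim
    · exact Or.inl ⟨p, ⟨by simpa using hp, by simp⟩, rfl⟩
    · exact (not_isL_isR iso (Or.inr (Or.inr ⟨i', rfl⟩)) hR).elim
    · exact Or.inr (Or.inr ⟨j, ⟨by simpa using hj, by simp⟩, rfl⟩)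
  · rintro (⟨p, ⟨hmem, -⟩, rfl⟩ | ⟨p, ⟨hmem, -⟩, rfl⟩ | ⟨j, ⟨hmem, -⟩, rfl⟩)
    · exact ⟨⟨Or.inr (Or.inr (Or.inr (Or.inl ⟨p, by simpa using hmem, rfl⟩))),
        ne_of_R_L iso (Or.inl ⟨p, rfl⟩) hqL⟩, Or.inl ⟨p, rfl⟩⟩
    · exact ⟨⟨Or.inr (Or.inl ⟨p, by simpa using hmem, rfl⟩),
        ne_of_R_L iso (Or.inr (Or.inl ⟨p, rfl⟩)) hqL⟩, Or.inr (Or.inl ⟨p, rfl⟩)⟩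
    · exact ⟨⟨Or.inr (Or.inr (Or.inr (Or.inr (Or.inr ⟨j, by simpa using hmem, rfl⟩)))),
        ne_of_R_L iso (Or.inr (Or.inr ⟨j, rfl⟩)) hqL⟩, Or.inr (Or.inr ⟨j, rfl⟩)⟩

lemma pair_inter_L (iso : NetIso (comp N₁ N₂) N) {u : N₁.T} {v : N₂.T} {i : Fin n}
    {hu : N₁.tgt u = {i}} {hv : N₂.src v = {i}} {q : Port N}
    (hq : q ∈ eportsR N (partR N₁ N₂ N iso)) :
    (tports N (pairT iso u v i hu hv) \ {q}) ∩ eportsL N (partL N₁ N₂ N iso) =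
      liftSetL N₁ N₂ N iso (tports N₁ u \ {bRight i}) := by
  have hqR := (mem_R_iff iso).1 hq
  ext x
  simp only [Set.mem_inter_iff, Set.mem_diff, Set.mem_singleton_iff, mem_tports_pair iso,
    mem_L_iff iso, liftSetL, Set.mem_setOf_eq]
  constructor
  · rintro ⟨⟨hforms, -⟩, hL⟩
    rcases hforms with ⟨p, hp, rfl⟩ | ⟨p, hp, rfl⟩ | ⟨p, hp, rfl⟩ | ⟨p, hp, rfl⟩ |
      ⟨i', hi', rfl⟩ | ⟨j, hj, rfl⟩
    · exact Or.inr (Or.inl ⟨p, ⟨by simpa using hp, by simp⟩, rfl⟩)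
    · exact (not_isL_isR iso hL (Or.inr (Or.inl ⟨p, rfl⟩))).elim
    · exact Or.inl ⟨p, ⟨by simpa using hp, by simp⟩, rfl⟩
    · exact (not_isL_isR iso hL (Or.inl ⟨p, rfl⟩)).elim
    · exact Or.inr (Or.inr ⟨i', ⟨by simpa using hi', by simp⟩, rfl⟩)
    · exact (not_isL_isR iso hL (Or.inr (Or.inr ⟨j, rfl⟩))).elim
  · rintro (⟨p, ⟨hmem, -⟩, rfl⟩ | ⟨p, ⟨hmem, -⟩, rfl⟩ | ⟨i', ⟨hmem, -⟩, rfl⟩)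
    · exact ⟨⟨Or.inr (Or.inr (Or.inl ⟨p, by simpa using hmem, rfl⟩)),
        ne_of_L_R iso (Or.inl ⟨p, rfl⟩) hqR⟩, Or.inl ⟨p, rfl⟩⟩
    · exact ⟨⟨Or.inl ⟨p, by simpa using hmem, rfl⟩,
        ne_of_L_R iso (Or.inr (Or.inl ⟨p, rfl⟩)) hqR⟩, Or.inr (Or.inl ⟨p, rfl⟩)⟩
    · exact ⟨⟨Or.inr (Or.inr (Or.inr (Or.inr (Or.inl ⟨i', by simpa using hmem, rfl⟩)))),
        ne_of_L_R iso (Or.inr (Or.inr ⟨i', rfl⟩)) hqR⟩, Or.inr (Or.inr ⟨i', rfl⟩)⟩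

lemma ssub_of_lift_nonempty (iso : NetIso (comp N₁ N₂) N) {v : N₂.T} {i : Fin n}
    (hv : N₂.src v = {i})
    (hne : (liftSetR N₁ N₂ N iso (tports N₂ v \ {bLeft i})).Nonempty) :
    {bLeft i} ⊂ tports N₂ v := by
  rw [Set.ssubset_iff_of_subset (Set.singleton_subset_iff.2 (by simp [hv]))]
  obtain ⟨x, hx⟩ := hne
  simp only [liftSetR, Set.mem_setOf_eq] at hx
  rcases hx with ⟨p, ⟨h1, h2⟩, -⟩ | ⟨p, ⟨h1, h2⟩, -⟩ | ⟨j, ⟨h1, h2⟩, -⟩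
  exacts [⟨portIn p, h1, h2⟩, ⟨portOut p, h1, h2⟩, ⟨bRight j, h1, h2⟩]

lemma ssub_of_liftL_nonempty (iso : NetIso (comp N₁ N₂) N) {u : N₁.T} {i : Fin n}
    (hu : N₁.tgt u = {i})
    (hne : (liftSetL N₁ N₂ N iso (tports N₁ u \ {bRight i})).Nonempty) :
    {bRight i} ⊂ tports N₁ u := by
  rw [Set.ssubset_iff_of_subset (Set.singleton_subset_iff.2 (by simp [hu]))]
  obtain ⟨x, hx⟩ := hne
  simp only [liftSetL, Set.mem_setOf_eq] at hx
  rcases hx with ⟨p, ⟨h1, h2⟩, -⟩ | ⟨p, ⟨h1, h2⟩, -⟩ | ⟨i', ⟨h1, h2⟩, -⟩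
  exacts [⟨portIn p, h1, h2⟩, ⟨portOut p, h1, h2⟩, ⟨bLeft i', h1, h2⟩]

lemma lift_nonempty (iso : NetIso (comp N₁ N₂) N) (hpure : Pure N₁ N₂) {v : N₂.T} {i : Fin n}
    (hlt : {bLeft i} ⊂ tports N₂ v) :
    (liftSetR N₁ N₂ N iso (tports N₂ v \ {bLeft i})).Nonempty := by
  obtain ⟨x, hx, hxn⟩ := Set.exists_of_ssubset hlt
  have hi : i ∈ N₂.src v := by simpa using subset_of_ssubset hlt rfl
  rcases mem_tports.1 hx with ⟨p, hp, rfl⟩ | ⟨p, hp, rfl⟩ | ⟨i', hi', rfl⟩ | ⟨j, hj, rfl⟩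
  · exact ⟨portOut (iso.ep (Sum.inr p)), Or.inr (Or.inl ⟨p, ⟨hx, hxn⟩, rfl⟩)⟩
  · exact ⟨portIn (iso.ep (Sum.inr p)), Or.inl ⟨p, ⟨hx, hxn⟩, rfl⟩⟩
  · exact absurd (by rw [src_subsingleton hpure v hi' hi]; exact rfl) hxn
  · exact ⟨bRight j, Or.inr (Or.inr ⟨j, ⟨hx, hxn⟩, rfl⟩)⟩

lemma liftL_nonempty (iso : NetIso (comp N₁ N₂) N) (hpure : Pure N₁ N₂) {u : N₁.T} {i : Fin n}
    (hlt : {bRight i} ⊂ tports N₁ u) :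
    (liftSetL N₁ N₂ N iso (tports N₁ u \ {bRight i})).Nonempty := by
  obtain ⟨x, hx, hxn⟩ := Set.exists_of_ssubset hlt
  have hi : i ∈ N₁.tgt u := by simpa using subset_of_ssubset hlt rfl
  rcases mem_tports.1 hx with ⟨p, hp, rfl⟩ | ⟨p, hp, rfl⟩ | ⟨i', hi', rfl⟩ | ⟨j, hj, rfl⟩
  · exact ⟨portOut (iso.ep (Sum.inl p)), Or.inr (Or.inl ⟨p, ⟨hx, hxn⟩, rfl⟩)⟩
  · exact ⟨portIn (iso.ep (Sum.inl p)), Or.inl ⟨p, ⟨hx, hxn⟩, rfl⟩⟩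
  · exact ⟨bLeft i', Or.inr (Or.inr ⟨i', ⟨hx, hxn⟩, rfl⟩)⟩
  · exact absurd (by rw [tgt_subsingleton hpure u hj hi]; exact rfl) hxn

lemma mem_pair_left (iso : NetIso (comp N₁ N₂) N) {u : N₁.T} {v v' : N₂.T} {i : Fin n}
    {hu : N₁.tgt u = {i}} {hv : N₂.src v = {i}} {hv' : N₂.src v' = {i}} {q : Port N}
    (hq : q ∈ eportsL N (partL N₁ N₂ N iso)) (h : q ∈ tports N (pairT iso u v i hu hv)) :
    q ∈ tports N (pairT iso u v' i hu hv') := by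
  have hqL := (mem_L_iff iso).1 hq
  rw [mem_tports_pair iso] at h ⊢
  rcases h with ⟨p, hp, rfl⟩ | ⟨p, hp, rfl⟩ | ⟨p, hp, rfl⟩ | ⟨p, hp, rfl⟩ |
    ⟨i', hi', rfl⟩ | ⟨j, hj, rfl⟩
  · exact Or.inl ⟨p, hp, rfl⟩
  · exact (not_isL_isR iso hqL (Or.inr (Or.inl ⟨p, rfl⟩))).elim
  · exact Or.inr (Or.inr (Or.inl ⟨p, hp, rfl⟩))
  · exact (not_isL_isR iso hqL (Or.inl ⟨p, rfl⟩)).elim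
  · exact Or.inr (Or.inr (Or.inr (Or.inr (Or.inl ⟨i', hi', rfl⟩))))
  · exact (not_isL_isR iso hqL (Or.inr (Or.inr ⟨j, rfl⟩))).elim

lemma mem_pair_right (iso : NetIso (comp N₁ N₂) N) {u u' : N₁.T} {v : N₂.T} {i : Fin n}
    {hu : N₁.tgt u = {i}} {hu' : N₁.tgt u' = {i}} {hv : N₂.src v = {i}} {q : Port N}
    (hq : q ∈ eportsR N (partR N₁ N₂ N iso)) (h : q ∈ tports N (pairT iso u v i hu hv)) :
    q ∈ tports N (pairT iso u' v i hu' hv) := by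
  have hqR := (mem_R_iff iso).1 hq
  rw [mem_tports_pair iso] at h ⊢
  rcases h with ⟨p, hp, rfl⟩ | ⟨p, hp, rfl⟩ | ⟨p, hp, rfl⟩ | ⟨p, hp, rfl⟩ |
    ⟨i', hi', rfl⟩ | ⟨j, hj, rfl⟩
  · exact (not_isL_isR iso (Or.inr (Or.inl ⟨p, rfl⟩)) hqR).elim
  · exact Or.inr (Or.inl ⟨p, hp, rfl⟩)
  · exact (not_isL_isR iso (Or.inl ⟨p, rfl⟩) hqR).elim
  · exact Or.inr (Or.inr (Or.inr (Or.inl ⟨p, hp, rfl⟩)))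
  · exact (not_isL_isR iso (Or.inr (Or.inr ⟨i', rfl⟩)) hqR).elim
  · exact Or.inr (Or.inr (Or.inr (Or.inr (Or.inr ⟨j, hj, rfl⟩))))

lemma mem_bconnR (iso : NetIso (comp N₁ N₂) N) {i : Fin n} {K' : Set (Port N)} :
    K' ∈ bconnR N₁ N₂ N iso i ↔ ∃ v : N₂.T, {bLeft i} ⊂ tports N₂ v ∧
      K' = liftSetR N₁ N₂ N iso (tports N₂ v \ {bLeft i}) := by
  constructor
  · rintro ⟨K, ⟨v, h1, rfl⟩, rfl⟩
    exact ⟨v, h1, rfl⟩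
  · rintro ⟨v, h1, rfl⟩
    exact ⟨_, ⟨v, h1, rfl⟩, rfl⟩

lemma mem_bconnL (iso : NetIso (comp N₁ N₂) N) {i : Fin n} {K' : Set (Port N)} :
    K' ∈ bconnL N₁ N₂ N iso i ↔ ∃ u : N₁.T, {bRight i} ⊂ tports N₁ u ∧
      K' = liftSetL N₁ N₂ N iso (tports N₁ u \ {bRight i}) := by
  constructor
  · rintro ⟨K, ⟨u, h1, rfl⟩, rfl⟩
    exact ⟨u, h1, rfl⟩
  · rintro ⟨u, h1, rfl⟩
    exact ⟨_, ⟨u, h1, rfl⟩, rfl⟩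

lemma dim_LR (iso : NetIso (comp N₁ N₂) N) (hpure : Pure N₁ N₂) :
    netDim (networkLR N (partL N₁ N₂ N iso) (partR N₁ N₂ N iso)) ≤ n := by
  apply Nat.sInf_le
  refine ⟨bconnR N₁ N₂ N iso, fun c hc => ?_⟩
  obtain ⟨q, hq, rfl⟩ := hc
  refine ⟨(Set.toFinite {i : Fin n |
    ∃ (u : N₁.T) (v : N₂.T) (hu : N₁.tgt u = {i}) (hv : N₂.src v = {i}),
      q ∈ tports N (pairT iso u v i hu hv)}).toFinset, ?_⟩
  ext K'
  simp only [Set.mem_iUnion, Set.Finite.mem_toFinset, Set.mem_setOf_eq, exists_prop]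
  constructor
  · rintro ⟨K, ⟨t, hlt, rfl⟩, hne, rfl⟩
    obtain ⟨t₀, rfl⟩ := iso.et.surjective t
    rcases minimal_shape hpure t₀.1 t₀.2 with hVe | hUe | ⟨u, v, i, hu, hv, hU, hV⟩
    · rw [caseV_empty iso hVe q] at hne
      exact absurd hne (by simp)
    · exact absurd (subset_of_ssubset hlt rfl) (caseU_empty iso hUe hq)
    · have ht₀ : t₀ = ⟨pairSync u v i hu hv, pairSync_minimal u v i hu hv⟩ :=
        Subtype.ext (Sync.ext' hU hV)
      subst ht₀
      have key : (tports N (pairT iso u v i hu hv) \ {q}) ∩ eportsR N (partR N₁ N₂ N iso) =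
          liftSetR N₁ N₂ N iso (tports N₂ v \ {bLeft i}) := pair_inter_R iso hq
      unfold pairT at key
      rw [key] at hne ⊢
      exact ⟨i, ⟨u, v, hu, hv, subset_of_ssubset hlt rfl⟩,
        (mem_bconnR iso).2 ⟨v, ssub_of_lift_nonempty iso hv hne, rfl⟩⟩
  · rintro ⟨i, ⟨u, v, hu, hv, hqmem⟩, hK'⟩
    obtain ⟨v', hlt', rfl⟩ := (mem_bconnR iso).1 hK'
    have hv' : N₂.src v' = {i} := Set.eq_singleton_iff_unique_mem.2
      ⟨by simpa using subset_of_ssubset hlt' rfl,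
       fun x hx => src_subsingleton hpure v' hx (by simpa using subset_of_ssubset hlt' rfl)⟩
    have hq' : q ∈ tports N (pairT iso u v' i hu hv') := mem_pair_left iso hq hqmem
    have key : (tports N (pairT iso u v' i hu hv') \ {q}) ∩ eportsR N (partR N₁ N₂ N iso) =
        liftSetR N₁ N₂ N iso (tports N₂ v' \ {bLeft i}) := pair_inter_R iso hq
    have hne := lift_nonempty iso hpure hlt'
    refine ⟨tports N (pairT iso u v' i hu hv') \ {q},
      ⟨pairT iso u v' i hu hv', ?_, rfl⟩, ?_, key.symm⟩
    · rw [Set.ssubset_iff_of_subset (Set.singleton_subset_iff.2 hq')]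
      obtain ⟨x, hx⟩ := hne
      rw [← key] at hx
      exact ⟨x, hx.1.1, hx.1.2⟩
    · rw [key]; exact hne

lemma dim_RL (iso : NetIso (comp N₁ N₂) N) (hpure : Pure N₁ N₂) :
    netDim (networkRL N (partL N₁ N₂ N iso) (partR N₁ N₂ N iso)) ≤ n := by
  apply Nat.sInf_le
  refine ⟨bconnL N₁ N₂ N iso, fun c hc => ?_⟩
  obtain ⟨q, hq, rfl⟩ := hc
  refine ⟨(Set.toFinite {i : Fin n |
    ∃ (u : N₁.T) (v : N₂.T) (hu : N₁.tgt u = {i}) (hv : N₂.src v = {i}),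
      q ∈ tports N (pairT iso u v i hu hv)}).toFinset, ?_⟩
  ext K'
  simp only [Set.mem_iUnion, Set.Finite.mem_toFinset, Set.mem_setOf_eq, exists_prop]
  constructor
  · rintro ⟨K, ⟨t, hlt, rfl⟩, hne, rfl⟩
    obtain ⟨t₀, rfl⟩ := iso.et.surjective t
    rcases minimal_shape hpure t₀.1 t₀.2 with hVe | hUe | ⟨u, v, i, hu, hv, hU, hV⟩
    · exact absurd (subset_of_ssubset hlt rfl) (caseV_notmem iso hVe hq)
    · rw [caseU_empty_R iso hUe q] at hne
      exact absurd hne (by simp)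
    · have ht₀ : t₀ = ⟨pairSync u v i hu hv, pairSync_minimal u v i hu hv⟩ :=
        Subtype.ext (Sync.ext' hU hV)
      subst ht₀
      have key : (tports N (pairT iso u v i hu hv) \ {q}) ∩ eportsL N (partL N₁ N₂ N iso) =
          liftSetL N₁ N₂ N iso (tports N₁ u \ {bRight i}) := pair_inter_L iso hq
      unfold pairT at key
      rw [key] at hne ⊢
      exact ⟨i, ⟨u, v, hu, hv, subset_of_ssubset hlt rfl⟩,
        (mem_bconnL iso).2 ⟨u, ssub_of_liftL_nonempty iso hu hne, rfl⟩⟩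
  · rintro ⟨i, ⟨u, v, hu, hv, hqmem⟩, hK'⟩
    obtain ⟨u', hlt', rfl⟩ := (mem_bconnL iso).1 hK'
    have hu' : N₁.tgt u' = {i} := Set.eq_singleton_iff_unique_mem.2
      ⟨by simpa using subset_of_ssubset hlt' rfl,
       fun x hx => tgt_subsingleton hpure u' hx (by simpa using subset_of_ssubset hlt' rfl)⟩
    have hq' : q ∈ tports N (pairT iso u' v i hu' hv) := mem_pair_right iso hq hqmem
    have key : (tports N (pairT iso u' v i hu' hv) \ {q}) ∩ eportsL N (partL N₁ N₂ N iso) =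
        liftSetL N₁ N₂ N iso (tports N₁ u' \ {bRight i}) := pair_inter_L iso hq
    have hne := liftL_nonempty iso hpure hlt'
    refine ⟨tports N (pairT iso u' v i hu' hv) \ {q},
      ⟨pairT iso u' v i hu' hv, ?_, rfl⟩, ?_, key.symm⟩
    · rw [Set.ssubset_iff_of_subset (Set.singleton_subset_iff.2 hq')]
      obtain ⟨x, hx⟩ := hne
      rw [← key] at hx
      exact ⟨x, hx.1.1, hx.1.2⟩
    · rw [key]; exact hne

end Aux2

/-- Lower bound on shared boundaries.  If the net with
boundaries `N : k → l` decomposes as `N ≅ N₁ ; N₂` with `N₁ : k → n`,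
`N₂ : n → l`, a pure composition, both components having nonempty place
sets, and `(P₁, P₂)` is the induced oriented partition of the places of `N`,
then `n ≥ dim(net(P₁ → P₂))` and `n ≥ dim(net(P₂ → P₁))`. -/
theorem boundary_dimension_lower_bound {k n l : ℕ}
    (N₁ : NetB k n) (N₂ : NetB n l) (N : NetB k l)
    (hN₁ : IsContention N₁) (hN₂ : IsContention N₂) (hN : IsContention N)
    (hP₁ : Nonempty N₁.P) (hP₂ : Nonempty N₂.P)
    (iso : NetIso (comp N₁ N₂) N) (hpure : Pure N₁ N₂) :
    netDim (networkLR N (partL N₁ N₂ N iso) (partR N₁ N₂ N iso)) ≤ n ∧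
    netDim (networkRL N (partL N₁ N₂ N iso) (partR N₁ N₂ N iso)) ≤ n :=
  ⟨dim_LR iso hpure, dim_RL iso hpure⟩

end NWB
end

section
/- Well-definedness of composition: for nets with boundaries M : l → m and N : m → n, the relation on minimal synchronisations given by (U,V) ⋈ (U′,V′) iff U ⋈ U′ or V ⋈ V′ is a contention relation for the net M ; N; that is, it is reflexive and symmetric, and whenever two minimal synchronisations have intersecting pre-sets, intersecting post-sets, intersecting left-boundary connections, or intersecting right-boundary connections in M ; N, they are related. -/
namespace NWB

/-- Well-definedness of composition: for nets with
boundaries `M : l → m`, `N : m → n`, the relation on minimal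
synchronisations given by `(U,V) ⋈ (U′,V′)` iff `U ⋈ U′` or `V ⋈ V′` is a
contention relation for `M ; N`: reflexive, symmetric, and relating any two
minimal synchronisations with intersecting pre-sets, post-sets,
left-boundary connections, or right-boundary connections. -/
theorem comp_isContention {l m n : ℕ} (M : NetB l m) (N : NetB m n)
    (hM : IsContention M) (hN : IsContention N) :
    IsContention (comp M N) := by
  obtain ⟨Mrefl, Msymm, Mcon⟩ := hM
  obtain ⟨Nrefl, Nsymm, Ncon⟩ := hN
  refine ⟨?_, ?_, ?_⟩
  · rintro ⟨s, hmin⟩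
    have hnt := hmin.1
    rw [Sync.Trivial] at hnt
    push_neg at hnt
    by_cases hU : s.U = ∅
    · obtain ⟨v, hv⟩ := hnt hU
      exact Or.inr ⟨v, hv, v, hv, Nrefl v⟩
    · obtain ⟨u, hu⟩ := Set.nonempty_iff_ne_empty.2 hU
      exact Or.inl ⟨u, hu, u, hu, Mrefl u⟩
  · rintro t u (⟨a, ha, b, hb, h⟩ | ⟨a, ha, b, hb, h⟩)
    · exact Or.inl ⟨b, hb, a, ha, Msymm _ _ h⟩
    · exact Or.inr ⟨b, hb, a, ha, Nsymm _ _ h⟩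
  · rintro t u h
    have keyM : ∀ (f : M.T → Set M.P),
        (∀ a b, ((f a) ∩ (f b)).Nonempty → M.con a b) →
        ((⋃ a ∈ t.1.U, f a) ∩ ⋃ a ∈ u.1.U, f a).Nonempty →
        setCon M t.1.U u.1.U := by
      rintro f hf ⟨x, hx1, hx2⟩
      simp only [Set.mem_iUnion] at hx1 hx2
      obtain ⟨a, ha, hxa⟩ := hx1
      obtain ⟨b, hb, hxb⟩ := hx2
      exact ⟨a, ha, b, hb, hf a b ⟨x, hxa, hxb⟩⟩
    have keyN : ∀ (f : N.T → Set N.P),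
        (∀ a b, ((f a) ∩ (f b)).Nonempty → N.con a b) →
        ((⋃ a ∈ t.1.V, f a) ∩ ⋃ a ∈ u.1.V, f a).Nonempty →
        setCon N t.1.V u.1.V := by
      rintro f hf ⟨x, hx1, hx2⟩
      simp only [Set.mem_iUnion] at hx1 hx2
      obtain ⟨a, ha, hxa⟩ := hx1
      obtain ⟨b, hb, hxb⟩ := hx2
      exact ⟨a, ha, b, hb, hf a b ⟨x, hxa, hxb⟩⟩
    rcases h with h | h | h | h
    · -- pre
      obtain ⟨x, hx1, hx2⟩ := h
      rcases hx1 with ⟨y, hy, rfl⟩ | ⟨y, hy, rfl⟩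
      · rcases hx2 with ⟨z, hz, hzz⟩ | ⟨z, hz, hzz⟩
        · cases Sum.inl_injective hzz
          exact Or.inl (keyM M.pre (fun a b hab => Mcon a b (Or.inl hab)) ⟨y, hy, hz⟩)
        · exact absurd hzz (by simp)
      · rcases hx2 with ⟨z, hz, hzz⟩ | ⟨z, hz, hzz⟩
        · exact absurd hzz (by simp)
        · cases Sum.inr_injective hzz
          exact Or.inr (keyN N.pre (fun a b hab => Ncon a b (Or.inl hab)) ⟨y, hy, hz⟩)
    · -- post
      obtain ⟨x, hx1, hx2⟩ := h
      rcases hx1 with ⟨y, hy, rfl⟩ | ⟨y, hy, rfl⟩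
      · rcases hx2 with ⟨z, hz, hzz⟩ | ⟨z, hz, hzz⟩
        · cases Sum.inl_injective hzz
          exact Or.inl (keyM M.post (fun a b hab => Mcon a b (Or.inr (Or.inl hab))) ⟨y, hy, hz⟩)
        · exact absurd hzz (by simp)
      · rcases hx2 with ⟨z, hz, hzz⟩ | ⟨z, hz, hzz⟩
        · exact absurd hzz (by simp)
        · cases Sum.inr_injective hzz
          exact Or.inr (keyN N.post (fun a b hab => Ncon a b (Or.inr (Or.inl hab))) ⟨y, hy, hz⟩)
    · -- src
      obtain ⟨x, hx1, hx2⟩ := h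
      simp only [comp, setSrc, Set.mem_iUnion] at hx1 hx2
      obtain ⟨a, ha, hxa⟩ := hx1
      obtain ⟨b, hb, hxb⟩ := hx2
      exact Or.inl ⟨a, ha, b, hb, Mcon a b (Or.inr (Or.inr (Or.inl ⟨x, hxa, hxb⟩)))⟩
    · -- tgt
      obtain ⟨x, hx1, hx2⟩ := h
      simp only [comp, setTgt, Set.mem_iUnion] at hx1 hx2
      obtain ⟨a, ha, hxa⟩ := hx1
      obtain ⟨b, hb, hxb⟩ := hx2
      exact Or.inr ⟨a, ha, b, hb, Ncon a b (Or.inr (Or.inr (Or.inr ⟨x, hxa, hxb⟩)))⟩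

end NWB
end

section
/- Compositionality of ';' with respect to the step firing semantics: for nets with boundaries M : l → m and N : m → n and markings X, X′ ⊆ P_M, Y, Y′ ⊆ P_N, there is a transition (X+Y) →⟨α,β⟩ (X′+Y′) in the labelled transition system ⟦M ; N⟧ if and only if there exists γ ⊆ [m] such that X →⟨α,γ⟩ X′ in ⟦M⟧ and Y →⟨γ,β⟩ Y′ in ⟦N⟧. -/
namespace NWB

section Aux

variable {l m n : ℕ}

lemma biUnion_biUnion' {ι T γ : Type*} (W : Set ι) (f : ι → Set T) (g : T → Set γ) :
    (⋃ u ∈ ⋃ i ∈ W, f i, g u) = ⋃ i ∈ W, ⋃ u ∈ f i, g u := by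
  ext x; simp only [Set.mem_iUnion, exists_prop]; tauto

lemma setPre_biUnion (M : NetB l m) {ι : Type*} (W : Set ι) (f : ι → Set M.T) :
    setPre M (⋃ i ∈ W, f i) = ⋃ i ∈ W, setPre M (f i) :=
  biUnion_biUnion' W f M.pre

lemma setPost_biUnion (M : NetB l m) {ι : Type*} (W : Set ι) (f : ι → Set M.T) :
    setPost M (⋃ i ∈ W, f i) = ⋃ i ∈ W, setPost M (f i) :=
  biUnion_biUnion' W f M.post

lemma setSrc_biUnion (M : NetB l m) {ι : Type*} (W : Set ι) (f : ι → Set M.T) :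
    setSrc M (⋃ i ∈ W, f i) = ⋃ i ∈ W, setSrc M (f i) :=
  biUnion_biUnion' W f M.src

lemma setTgt_biUnion (M : NetB l m) {ι : Type*} (W : Set ι) (f : ι → Set M.T) :
    setTgt M (⋃ i ∈ W, f i) = ⋃ i ∈ W, setTgt M (f i) :=
  biUnion_biUnion' W f M.tgt

lemma MI.mono {k l : ℕ} {N : NetB k l} {U V : Set N.T} (h : MI N V) (hsub : U ⊆ V) :
    MI N U := fun u hu v hv hc => h u (hsub hu) v (hsub hv) hc

lemma setTgt_diff (M : NetB l m) (hM : IsContention M) {U₀ U : Set M.T}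
    (hMI : MI M U) (hsub : U₀ ⊆ U) :
    setTgt M (U \ U₀) = setTgt M U \ setTgt M U₀ := by
  ext i
  simp only [setTgt, Set.mem_iUnion, Set.mem_diff, exists_prop]
  constructor
  · rintro ⟨u, ⟨hu, hu0⟩, hi⟩
    refine ⟨⟨u, hu, hi⟩, ?_⟩
    rintro ⟨u0, hu0', hi0⟩
    have : M.con u u0 := hM.2.2 u u0 (Or.inr (Or.inr (Or.inr ⟨i, hi, hi0⟩)))
    exact hu0 (hMI u hu u0 (hsub hu0') this ▸ hu0')
  · rintro ⟨⟨u, hu, hi⟩, hni⟩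
    exact ⟨u, ⟨hu, fun h0 => hni ⟨u, h0, hi⟩⟩, hi⟩

lemma setSrc_diff (M : NetB l m) (hM : IsContention M) {U₀ U : Set M.T}
    (hMI : MI M U) (hsub : U₀ ⊆ U) :
    setSrc M (U \ U₀) = setSrc M U \ setSrc M U₀ := by
  ext i
  simp only [setSrc, Set.mem_iUnion, Set.mem_diff, exists_prop]
  constructor
  · rintro ⟨u, ⟨hu, hu0⟩, hi⟩
    refine ⟨⟨u, hu, hi⟩, ?_⟩
    rintro ⟨u0, hu0', hi0⟩
    have : M.con u u0 := hM.2.2 u u0 (Or.inr (Or.inr (Or.inl ⟨i, hi, hi0⟩)))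
    exact hu0 (hMI u hu u0 (hsub hu0') this ▸ hu0')
  · rintro ⟨⟨u, hu, hi⟩, hni⟩
    exact ⟨u, ⟨hu, fun h0 => hni ⟨u, h0, hi⟩⟩, hi⟩

/-- Every synchronisation decomposes into disjoint minimal synchronisations. -/
lemma sync_decompose (M : NetB l m) (N : NetB m n)
    (hM : IsContention M) (hN : IsContention N) (s : Sync M N) :
    ∃ W : Set (Sync M N),
      (∀ w ∈ W, w.Minimal ∧ w.U ⊆ s.U ∧ w.V ⊆ s.V) ∧
      (∀ w₁ ∈ W, ∀ w₂ ∈ W, w₁ ≠ w₂ → w₁.U ∩ w₂.U = ∅ ∧ w₁.V ∩ w₂.V = ∅) ∧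
      (⋃ w ∈ W, w.U) = s.U ∧ (⋃ w ∈ W, w.V) = s.V := by
  haveI := M.finT; haveI := N.finT
  generalize hk : s.U.ncard + s.V.ncard = k
  induction k using Nat.strong_induction_on generalizing s with
  | _ k ih =>
  by_cases htriv : s.Trivial
  · refine ⟨∅, by simp, by simp, ?_, ?_⟩ <;> simp [htriv.1, htriv.2]
  by_cases hmin : s.Minimal
  · refine ⟨{s}, ?_, ?_, by simp, by simp⟩
    · rintro w rfl; exact ⟨hmin, subset_rfl, subset_rfl⟩
    · rintro w₁ rfl w₂ rfl h; exact absurd rfl h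
  · -- s is non-trivial and non-minimal: split off a strictly smaller sync
    rw [Sync.Minimal, not_and_or] at hmin
    rcases hmin with hmin | hmin
    · exact absurd (not_not.mp hmin) htriv
    push_neg at hmin
    obtain ⟨s', hU', hV', hnt', hne'⟩ := hmin
    have hne' : ¬(s'.U = s.U ∧ s'.V = s.V) := by
      intro h; exact hne' h.1 h.2
    -- the complement synchronisation
    have hbd : setTgt M (s.U \ s'.U) = setSrc N (s.V \ s'.V) := by
      rw [setTgt_diff M hM s.miU hU', setSrc_diff N hN s.miV hV', s.bd, s'.bd]
    let s'' : Sync M N := ⟨s.U \ s'.U, s.V \ s'.V,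
      s.miU.mono Set.diff_subset, s.miV.mono Set.diff_subset, hbd⟩
    have hfinU : s.U.Finite := Set.toFinite _
    have hfinV : s.V.Finite := Set.toFinite _
    have hlt' : s'.U.ncard + s'.V.ncard < k := by
      rcases (not_and_or.mp hne') with h | h
      · have h1 : s'.U ⊂ s.U := Set.ssubset_iff_subset_ne.mpr ⟨hU', h⟩
        have := Set.ncard_lt_ncard h1 hfinU
        have := Set.ncard_le_ncard hV' hfinV
        omega
      · have h1 : s'.V ⊂ s.V := Set.ssubset_iff_subset_ne.mpr ⟨hV', h⟩
        have := Set.ncard_lt_ncard h1 hfinV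
        have := Set.ncard_le_ncard hU' hfinU
        omega
    have hlt'' : (s.U \ s'.U).ncard + (s.V \ s'.V).ncard < k := by
      have hnt'' : s'.U.Nonempty ∨ s'.V.Nonempty := by
        rw [Sync.Trivial, not_and_or] at hnt'
        rcases hnt' with h | h
        · exact Or.inl (Set.nonempty_iff_ne_empty.mpr h)
        · exact Or.inr (Set.nonempty_iff_ne_empty.mpr h)
      rcases hnt'' with ⟨x, hx⟩ | ⟨x, hx⟩
      · have h1 : s.U \ s'.U ⊂ s.U :=
          ⟨Set.diff_subset, fun h2 => (h2 (hU' hx)).2 hx⟩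
        have := Set.ncard_lt_ncard h1 hfinU
        have := Set.ncard_le_ncard (Set.diff_subset : s.V \ s'.V ⊆ s.V) hfinV
        omega
      · have h1 : s.V \ s'.V ⊂ s.V :=
          ⟨Set.diff_subset, fun h2 => (h2 (hV' hx)).2 hx⟩
        have := Set.ncard_lt_ncard h1 hfinV
        have := Set.ncard_le_ncard (Set.diff_subset : s.U \ s'.U ⊆ s.U) hfinU
        omega
    obtain ⟨W₁, hW₁, hW₁d, hW₁U, hW₁V⟩ := ih _ hlt' s' rfl
    obtain ⟨W₂, hW₂, hW₂d, hW₂U, hW₂V⟩ := ih _ hlt'' s'' rfl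
    refine ⟨W₁ ∪ W₂, ?_, ?_, ?_, ?_⟩
    · rintro w (hw | hw)
      · exact ⟨(hW₁ w hw).1, (hW₁ w hw).2.1.trans hU', (hW₁ w hw).2.2.trans hV'⟩
      · exact ⟨(hW₂ w hw).1, (hW₂ w hw).2.1.trans Set.diff_subset,
          (hW₂ w hw).2.2.trans Set.diff_subset⟩
    · have cross : ∀ w₁ ∈ W₁, ∀ w₂ ∈ W₂, w₁.U ∩ w₂.U = ∅ ∧ w₁.V ∩ w₂.V = ∅ := by
        intro w₁ h₁ w₂ h₂
        constructor
        · apply Set.eq_empty_of_subset_empty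
          rintro x ⟨hx1, hx2⟩
          exact ((hW₂ w₂ h₂).2.1 hx2).2 ((hW₁ w₁ h₁).2.1 hx1)
        · apply Set.eq_empty_of_subset_empty
          rintro x ⟨hx1, hx2⟩
          exact ((hW₂ w₂ h₂).2.2 hx2).2 ((hW₁ w₁ h₁).2.2 hx1)
      rintro w₁ (h₁ | h₁) w₂ (h₂ | h₂) hne
      · exact hW₁d w₁ h₁ w₂ h₂ hne
      · exact cross w₁ h₁ w₂ h₂
      · obtain ⟨h1, h2⟩ := cross w₂ h₂ w₁ h₁
        exact ⟨by rw [Set.inter_comm]; exact h1, by rw [Set.inter_comm]; exact h2⟩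
      · exact hW₂d w₁ h₁ w₂ h₂ hne
    · rw [Set.biUnion_union, hW₁U, hW₂U]
      exact Set.union_diff_cancel hU'
    · rw [Set.biUnion_union, hW₁V, hW₂V]
      exact Set.union_diff_cancel hV'

/-! Sum-set helper lemmas. -/

lemma sum_union_subset {α β : Type*} {A X : Set α} {B Y : Set β} :
    (Sum.inl '' A ∪ Sum.inr '' B : Set (α ⊕ β)) ⊆ Sum.inl '' X ∪ Sum.inr '' Y ↔
      A ⊆ X ∧ B ⊆ Y := by
  constructor
  · intro h
    constructor
    · intro a ha
      rcases h (Or.inl ⟨a, ha, rfl⟩) with ⟨x, hx, hxe⟩ | ⟨y, _, hye⟩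
      · cases hxe; exact hx
      · cases hye
    · intro b hb
      rcases h (Or.inr ⟨b, hb, rfl⟩) with ⟨x, _, hxe⟩ | ⟨y, hy, hye⟩
      · cases hxe
      · cases hye; exact hy
  · rintro ⟨h1, h2⟩ x (⟨a, ha, rfl⟩ | ⟨b, hb, rfl⟩)
    · exact Or.inl ⟨a, h1 ha, rfl⟩
    · exact Or.inr ⟨b, h2 hb, rfl⟩

lemma sum_union_eq {α β : Type*} {A X : Set α} {B Y : Set β}
    (h : (Sum.inl '' A ∪ Sum.inr '' B : Set (α ⊕ β)) = Sum.inl '' X ∪ Sum.inr '' Y) :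
    A = X ∧ B = Y := by
  obtain ⟨h1, h2⟩ := sum_union_subset.mp h.le
  obtain ⟨h3, h4⟩ := sum_union_subset.mp h.ge
  exact ⟨subset_antisymm h1 h3, subset_antisymm h2 h4⟩

lemma sum_inter_empty {α β : Type*} {A X : Set α} {B Y : Set β} :
    (Sum.inl '' A ∪ Sum.inr '' B : Set (α ⊕ β)) ∩ (Sum.inl '' X ∪ Sum.inr '' Y) = ∅ ↔
      A ∩ X = ∅ ∧ B ∩ Y = ∅ := by
  constructor
  · intro h
    constructor
    · ext a
      simp only [Set.mem_inter_iff, Set.mem_empty_iff_false, iff_false, not_and]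
      intro ha hx
      have : (Sum.inl a : α ⊕ β) ∈ (∅ : Set (α ⊕ β)) := by
        rw [← h]; exact ⟨Or.inl ⟨a, ha, rfl⟩, Or.inl ⟨a, hx, rfl⟩⟩
      exact this
    · ext b
      simp only [Set.mem_inter_iff, Set.mem_empty_iff_false, iff_false, not_and]
      intro hb hy
      have : (Sum.inr b : α ⊕ β) ∈ (∅ : Set (α ⊕ β)) := by
        rw [← h]; exact ⟨Or.inr ⟨b, hb, rfl⟩, Or.inr ⟨b, hy, rfl⟩⟩
      exact this
  · rintro ⟨h1, h2⟩
    ext x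
    simp only [Set.mem_inter_iff, Set.mem_empty_iff_false, iff_false, not_and]
    rintro (⟨a, ha, rfl⟩ | ⟨b, hb, rfl⟩) h
    · rcases h with ⟨a', hx, he⟩ | ⟨y', hy, he⟩
      · cases he; exact Set.eq_empty_iff_forall_notMem.mp h1 a ⟨ha, hx⟩
      · cases he
    · rcases h with ⟨a', hx, he⟩ | ⟨y', hy, he⟩
      · cases he
      · cases he; exact Set.eq_empty_iff_forall_notMem.mp h2 b ⟨hb, hy⟩

lemma sum_diff_union {α β : Type*} (X A C : Set α) (Y B D : Set β) :
    ((Sum.inl '' X ∪ Sum.inr '' Y : Set (α ⊕ β)) \ (Sum.inl '' A ∪ Sum.inr '' B)) ∪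
        (Sum.inl '' C ∪ Sum.inr '' D) =
      Sum.inl '' ((X \ A) ∪ C) ∪ Sum.inr '' ((Y \ B) ∪ D) := by
  ext x
  cases x <;> simp [Sum.inl.injEq, Sum.inr.injEq]

lemma comp_setPre {l m n : ℕ} (M : NetB l m) (N : NetB m n) (W : Set (comp M N).T) :
    setPre (comp M N) W =
      Sum.inl '' setPre M (⋃ t ∈ W, t.1.U) ∪ Sum.inr '' setPre N (⋃ t ∈ W, t.1.V) := by
  show (⋃ t ∈ W, (Sum.inl '' setPre M t.1.U ∪ Sum.inr '' setPre N t.1.V)) = _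
  rw [setPre_biUnion M, setPre_biUnion N, Set.image_iUnion₂, Set.image_iUnion₂]
  ext x
  simp only [Set.mem_iUnion, Set.mem_union, exists_prop]
  constructor
  · rintro ⟨t, ht, h | h⟩
    · exact Or.inl ⟨t, ht, h⟩
    · exact Or.inr ⟨t, ht, h⟩
  · rintro (⟨t, ht, h⟩ | ⟨t, ht, h⟩)
    · exact ⟨t, ht, Or.inl h⟩
    · exact ⟨t, ht, Or.inr h⟩

lemma comp_setPost {l m n : ℕ} (M : NetB l m) (N : NetB m n) (W : Set (comp M N).T) :
    setPost (comp M N) W =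
      Sum.inl '' setPost M (⋃ t ∈ W, t.1.U) ∪ Sum.inr '' setPost N (⋃ t ∈ W, t.1.V) := by
  show (⋃ t ∈ W, (Sum.inl '' setPost M t.1.U ∪ Sum.inr '' setPost N t.1.V)) = _
  rw [setPost_biUnion M, setPost_biUnion N, Set.image_iUnion₂, Set.image_iUnion₂]
  ext x
  simp only [Set.mem_iUnion, Set.mem_union, exists_prop]
  constructor
  · rintro ⟨t, ht, h | h⟩
    · exact Or.inl ⟨t, ht, h⟩
    · exact Or.inr ⟨t, ht, h⟩
  · rintro (⟨t, ht, h⟩ | ⟨t, ht, h⟩)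
    · exact ⟨t, ht, Or.inl h⟩
    · exact ⟨t, ht, Or.inr h⟩

lemma comp_setSrc {l m n : ℕ} (M : NetB l m) (N : NetB m n) (W : Set (comp M N).T) :
    setSrc (comp M N) W = setSrc M (⋃ t ∈ W, t.1.U) :=
  (setSrc_biUnion M W fun t => t.1.U).symm

lemma comp_setTgt {l m n : ℕ} (M : NetB l m) (N : NetB m n) (W : Set (comp M N).T) :
    setTgt (comp M N) W = setTgt N (⋃ t ∈ W, t.1.V) :=
  (setTgt_biUnion N W fun t => t.1.V).symm

end Aux

/-- Compositionality of `;` w.r.t. step firing semantics: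
`(X+Y) →⟨α,β⟩ (X′+Y′)` in `⟦M ; N⟧` iff there is `γ ⊆ [m]` with
`X →⟨α,γ⟩ X′` in `⟦M⟧` and `Y →⟨γ,β⟩ Y′` in `⟦N⟧`. -/
theorem comp_fires {l m n : ℕ} (M : NetB l m) (N : NetB m n)
    (hM : IsContention M) (hN : IsContention N)
    (X X' : Set M.P) (Y Y' : Set N.P) (α : Set (Fin l)) (β : Set (Fin n)) :
    Fires (comp M N) (Sum.inl '' X ∪ Sum.inr '' Y) (Sum.inl '' X' ∪ Sum.inr '' Y') α β ↔
      ∃ γ : Set (Fin m), Fires M X X' α γ ∧ Fires N Y Y' γ β := by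
  constructor
  · rintro ⟨W, hWmi, hpre, hpost, hmark, hsrc, htgt⟩
    set U : Set M.T := ⋃ t ∈ W, t.1.U with hUdef
    set V : Set N.T := ⋃ t ∈ W, t.1.V with hVdef
    have hpre' := hpre; rw [comp_setPre] at hpre'
    obtain ⟨hpreU, hpreV⟩ := sum_union_subset.mp hpre'
    have hpost' := hpost; rw [comp_setPost] at hpost'
    obtain ⟨hpostU, hpostV⟩ := sum_inter_empty.mp hpost'
    have hmark' := hmark
    erw [comp_setPre, comp_setPost, sum_diff_union] at hmark'
    obtain ⟨hmarkU, hmarkV⟩ := sum_union_eq hmark'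
    have hMIU : MI M U := by
      rintro u hu v hv hc
      simp only [hUdef, Set.mem_iUnion, exists_prop] at hu hv
      obtain ⟨t, ht, hut⟩ := hu
      obtain ⟨t', ht', hvt'⟩ := hv
      have hte : t = t' := hWmi t ht t' ht' (Or.inl ⟨u, hut, v, hvt', hc⟩)
      subst hte
      exact t.1.miU u hut v hvt' hc
    have hMIV : MI N V := by
      rintro u hu v hv hc
      simp only [hVdef, Set.mem_iUnion, exists_prop] at hu hv
      obtain ⟨t, ht, hut⟩ := hu
      obtain ⟨t', ht', hvt'⟩ := hv
      have hte : t = t' := hWmi t ht t' ht' (Or.inr ⟨u, hut, v, hvt', hc⟩)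
      subst hte
      exact t.1.miV u hut v hvt' hc
    have hγ : setTgt M U = setSrc N V := by
      rw [hUdef, hVdef, setTgt_biUnion, setSrc_biUnion]
      exact Set.iUnion₂_congr fun t _ => t.1.bd
    refine ⟨setTgt M U, ⟨U, hMIU, hpreU, hpostU, hmarkU, ?_, rfl⟩,
      ⟨V, hMIV, hpreV, hpostV, hmarkV, hγ.symm, ?_⟩⟩
    · rw [← hsrc, comp_setSrc]
    · rw [← htgt, comp_setTgt]
  · rintro ⟨γ, ⟨U, hUmi, hUpre, hUpost, hUmark, hUsrc, hUtgt⟩,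
      ⟨V, hVmi, hVpre, hVpost, hVmark, hVsrc, hVtgt⟩⟩
    set s : Sync M N := ⟨U, V, hUmi, hVmi, hUtgt.trans hVsrc.symm⟩ with hsdef
    obtain ⟨W, hWmin, hWdisj, hWU, hWV⟩ := sync_decompose M N hM hN s
    have hWU : (⋃ w ∈ W, w.U) = U := hWU
    have hWV : (⋃ w ∈ W, w.V) = V := hWV
    set W' : Set (comp M N).T := {t | t.1 ∈ W} with hW'def
    have hU : (⋃ t ∈ W', t.1.U) = U := by
      ext u
      simp only [Set.mem_iUnion, exists_prop, hW'def, Set.mem_setOf_eq]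
      constructor
      · rintro ⟨t, ht, hu⟩
        have := Set.mem_biUnion ht hu
        rw [hWU] at this; exact this
      · intro hu
        rw [← hWU] at hu
        obtain ⟨w, hw, hu⟩ := Set.mem_iUnion₂.mp hu
        exact ⟨⟨w, (hWmin w hw).1⟩, hw, hu⟩
    have hV : (⋃ t ∈ W', t.1.V) = V := by
      ext u
      simp only [Set.mem_iUnion, exists_prop, hW'def, Set.mem_setOf_eq]
      constructor
      · rintro ⟨t, ht, hu⟩
        have := Set.mem_biUnion ht hu
        rw [hWV] at this; exact this
      · intro hu
        rw [← hWV] at hu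
        obtain ⟨w, hw, hu⟩ := Set.mem_iUnion₂.mp hu
        exact ⟨⟨w, (hWmin w hw).1⟩, hw, hu⟩
    refine ⟨W', ?_, ?_, ?_, ?_, ?_, ?_⟩
    · rintro t ht t' ht' hc
      by_cases hte : t.1 = t'.1
      · exact Subtype.ext hte
      exfalso
      rcases hc with ⟨u, hu, u', hu', hcon⟩ | ⟨u, hu, u', hu', hcon⟩
      · have h1 : u ∈ U := hWU ▸ Set.mem_biUnion ht hu
        have h2 : u' ∈ U := hWU ▸ Set.mem_biUnion ht' hu'
        have := hUmi u h1 u' h2 hcon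
        subst this
        have := (hWdisj t.1 ht t'.1 ht' hte).1
        exact Set.eq_empty_iff_forall_notMem.mp this u ⟨hu, hu'⟩
      · have h1 : u ∈ V := hWV ▸ Set.mem_biUnion ht hu
        have h2 : u' ∈ V := hWV ▸ Set.mem_biUnion ht' hu'
        have := hVmi u h1 u' h2 hcon
        subst this
        have := (hWdisj t.1 ht t'.1 ht' hte).2
        exact Set.eq_empty_iff_forall_notMem.mp this u ⟨hu, hu'⟩
    · rw [comp_setPre, hU, hV]
      exact sum_union_subset.mpr ⟨hUpre, hVpre⟩
    · rw [comp_setPost, hU, hV]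
      exact sum_inter_empty.mpr ⟨hUpost, hVpost⟩
    · erw [comp_setPre, comp_setPost, hU, hV, sum_diff_union, hUmark, hVmark]
      rfl
    · rw [comp_setSrc, hU, hUsrc]
    · rw [comp_setTgt, hV, hVtgt]

end NWB
end
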